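/- If B ⊆ F_q satisfies B - B ⊆ Q ∪ {0}, then |B|² ≤ q. -/
import Mathlib


theorem stmt_9 {F : Type*} [Field F] [Fintype F]
    (hq : Fintype.card F % 4 = 1) (B : Finset F)
    (hB : ∀ b₁ ∈ B, ∀ b₂ ∈ B, b₁ ≠ b₂ → b₁ - b₂ ≠ 0 ∧ IsSquare (b₁ - b₂)) :
    B.card ^ 2 ≤ Fintype.card F := by
  have hchar : ringChar F ≠ 2 := by
    intro h
    have he := FiniteField.even_card_of_char_two h
    omega
  obtain ⟨g, hg⟩ := FiniteField.exists_nonsquare hchar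
  have hg0 : g ≠ 0 := by
    rintro rfl
    exact hg ⟨0, by ring⟩
  have key : Set.InjOn (fun p : F × F => p.1 + g * p.2) (B ×ˢ B : Finset (F × F)) := by
    rintro ⟨a, b⟩ hab ⟨c, d⟩ hcd h
    simp only [Finset.coe_product, Set.mem_prod, Finset.mem_coe] at hab hcd
    simp only at h
    by_cases hbd : b = d
    · subst hbd
      have : a = c := by linear_combination h
      exact Prod.ext this rfl
    · exfalso
      have hdb := hB d hcd.2 b hab.2 (fun hh => hbd hh.symm)
      have hac : a - c = g * (d - b) := by linear_combination h
      by_cases hacq : a = c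
      · subst hacq
        have : g * (d - b) = 0 := by linear_combination -hac
        rcases mul_eq_zero.1 this with h1 | h1
        · exact hg0 h1
        · exact hdb.1 h1
      · have hsac := hB a hab.1 c hcd.1 hacq
        obtain ⟨x, hx⟩ := hsac.2
        obtain ⟨y, hy⟩ := hdb.2
        have hy0 : y ≠ 0 := by
          rintro rfl
          exact hdb.1 (by rw [hy]; ring)
        apply hg
        refine ⟨x * y⁻¹, ?_⟩
        have : g * (y * y) = x * x := by rw [← hy, ← hx]; linear_combination -hac
        field_simp
        linear_combination this
  classical
  have h1 : B.card ^ 2 = (B ×ˢ B).card := by rw [Finset.card_product]; ring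
  have h2 : (B ×ˢ B).card = ((B ×ˢ B).image (fun p : F × F => p.1 + g * p.2)).card :=
    (Finset.card_image_of_injOn key).symm
  rw [h1, h2]
  exact le_trans (Finset.card_le_univ _) (le_of_eq Finset.card_univ)
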